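/- Let α ∈ (1,2], β ∈ (0,1), ξ ∈ (0,1), and let f : [0,1] × ℝ × ℝ → ℝ be continuous with |f(t,u,v) − f(t,ū,v̄)| ≤ k(|u−ū| + |v−v̄|) for all t ∈ [0,1] and u, v, ū, v̄ ∈ ℝ, where k > 0. For continuous u, v, ū, v̄ : [0,1] → ℝ set F(s) = f(s, u(s), v(s)) and F̄(s) = f(s, ū(s), v̄(s)) and let N = max{ sup_{t∈[0,1]}|u(t)−ū(t)|, sup_{t∈[0,1]}|v(t)−v̄(t)| }. Then for every t ∈ [0,1]: (i) |(T₁F)(t) − (T₁F̄)(t)| ≤ 2·G*·k·N, and (ii) |(T₂F)(t) − (T₂F̄)(t)| ≤ 2k·((Γ(3−α)Γ(α−β+1) + Γ(2−β))/(Γ(3−α)Γ(α−β+1)))·N. -/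

import Mathlib

open Real MeasureTheory Set

/-- The Green function of the fractional boundary value problem. -/
noncomputable def G (α β ξ : ℝ) (t s : ℝ) : ℝ :=
  if s ≤ t then
    ((1 - ξ) * (t - s) ^ (α - 1) + ξ * (1 - s) ^ (α - 1)) / (Real.Gamma α * (1 - ξ))
      - Real.Gamma (2 - β) * (ξ + (1 - ξ) * t) * (1 - s) ^ (α - β - 1)
          / (Real.Gamma (α - β) * (1 - ξ))
  else
    ξ * (1 - s) ^ (α - 1) / (Real.Gamma α * (1 - ξ))
      - Real.Gamma (2 - β) * (ξ + (1 - ξ) * t) * (1 - s) ^ (α - β - 1)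
          / (Real.Gamma (α - β) * (1 - ξ))

/-- `G* = sup_{t ∈ [0,1]} ∫₀¹ |G(t,s)| ds`. -/
noncomputable def Gstar (α β ξ : ℝ) : ℝ :=
  ⨆ t : Set.Icc (0 : ℝ) 1, ∫ s in (0 : ℝ)..1, |G α β ξ (t : ℝ) s|

section Aux

variable {α β ξ : ℝ}

lemma w_intervalIntegrable (hr : (-1 : ℝ) < α - β - 1) :
    IntervalIntegrable (fun s : ℝ => (1 - s) ^ (α - β - 1)) volume 0 1 := by
  have h := (intervalIntegral.intervalIntegrable_rpow' (a := 0) (b := 1) hr).comp_sub_left 1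
  norm_num at h
  exact h.symm

lemma w_integral (hr : (0 : ℝ) < α - β) :
    (∫ s in (0 : ℝ)..1, (1 - s) ^ (α - β - 1)) = 1 / (α - β) := by
  rw [intervalIntegral.integral_comp_sub_left (fun x => x ^ (α - β - 1)) 1]
  norm_num
  rw [integral_rpow (Or.inl (by linarith))]
  rw [Real.one_rpow]
  have h1 : α - β - 1 + 1 = α - β := by ring
  rw [h1]
  field_simp
  rw [Real.zero_rpow hr.ne', sub_zero]

/-- Pointwise bound on `|G|`. -/
lemma G_abs_le (hα : 1 < α) (hα2 : α ≤ 2) (hβ : 0 < β) (hβ1 : β < 1)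
    (hξ : 0 < ξ) (hξ1 : ξ < 1) {t s : ℝ} (ht : t ∈ Set.Icc (0 : ℝ) 1)
    (hs : s ∈ Set.Icc (0 : ℝ) 1) :
    |G α β ξ t s| ≤ 1 / (Real.Gamma α * (1 - ξ))
      + Real.Gamma (2 - β) / (Real.Gamma (α - β) * (1 - ξ)) * (1 - s) ^ (α - β - 1) := by
  obtain ⟨ht0, ht1⟩ := ht
  obtain ⟨hs0, hs1⟩ := hs
  have hΓα : 0 < Real.Gamma α := Real.Gamma_pos_of_pos (by linarith)
  have hΓβ : 0 < Real.Gamma (2 - β) := Real.Gamma_pos_of_pos (by linarith)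
  have hΓαβ : 0 < Real.Gamma (α - β) := Real.Gamma_pos_of_pos (by linarith)
  have hden : 0 < Real.Gamma α * (1 - ξ) := mul_pos hΓα (by linarith)
  have hden2 : 0 < Real.Gamma (α - β) * (1 - ξ) := mul_pos hΓαβ (by linarith)
  have hw0 : 0 ≤ (1 - s) ^ (α - β - 1) := Real.rpow_nonneg (by linarith) _
  have hcoef0 : 0 ≤ ξ + (1 - ξ) * t := by nlinarith
  have hcoef1 : ξ + (1 - ξ) * t ≤ 1 := by nlinarith
  have hB0 : 0 ≤ Real.Gamma (2 - β) * (ξ + (1 - ξ) * t) * (1 - s) ^ (α - β - 1)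
      / (Real.Gamma (α - β) * (1 - ξ)) := by positivity
  have hB1 : Real.Gamma (2 - β) * (ξ + (1 - ξ) * t) * (1 - s) ^ (α - β - 1)
      / (Real.Gamma (α - β) * (1 - ξ))
      ≤ Real.Gamma (2 - β) / (Real.Gamma (α - β) * (1 - ξ)) * (1 - s) ^ (α - β - 1) := by
    rw [div_le_iff₀ hden2]
    have : Real.Gamma (2 - β) * (ξ + (1 - ξ) * t) * (1 - s) ^ (α - β - 1)
        ≤ Real.Gamma (2 - β) * 1 * (1 - s) ^ (α - β - 1) := by
      apply mul_le_mul_of_nonneg_right _ hw0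
      exact mul_le_mul_of_nonneg_left hcoef1 hΓβ.le
    calc Real.Gamma (2 - β) * (ξ + (1 - ξ) * t) * (1 - s) ^ (α - β - 1)
        ≤ Real.Gamma (2 - β) * 1 * (1 - s) ^ (α - β - 1) := this
      _ = Real.Gamma (2 - β) / (Real.Gamma (α - β) * (1 - ξ)) * (1 - s) ^ (α - β - 1)
          * (Real.Gamma (α - β) * (1 - ξ)) := by
            have h1ξ : (1:ℝ) - ξ ≠ 0 := by linarith
            field_simp
  have h1s : (1 - s) ^ (α - 1) ≤ 1 :=
    Real.rpow_le_one (by linarith) (by linarith) (by linarith)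
  have h1s0 : 0 ≤ (1 - s) ^ (α - 1) := Real.rpow_nonneg (by linarith) _
  unfold G
  split_ifs with h
  · have hts : (t - s) ^ (α - 1) ≤ 1 :=
      Real.rpow_le_one (by linarith) (by linarith) (by linarith)
    have hts0 : 0 ≤ (t - s) ^ (α - 1) := Real.rpow_nonneg (by linarith) _
    have hA0 : 0 ≤ ((1 - ξ) * (t - s) ^ (α - 1) + ξ * (1 - s) ^ (α - 1))
        / (Real.Gamma α * (1 - ξ)) := by
      apply div_nonneg _ hden.le
      nlinarith
    have hA1 : ((1 - ξ) * (t - s) ^ (α - 1) + ξ * (1 - s) ^ (α - 1))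
        / (Real.Gamma α * (1 - ξ)) ≤ 1 / (Real.Gamma α * (1 - ξ)) := by
      rw [div_le_div_iff₀ hden hden]
      have hN1 : (1 - ξ) * (t - s) ^ (α - 1) + ξ * (1 - s) ^ (α - 1) ≤ 1 := by nlinarith
      nlinarith [mul_le_mul_of_nonneg_right hN1 hden.le]
    rw [abs_le]
    constructor <;> linarith
  · have hA0 : 0 ≤ ξ * (1 - s) ^ (α - 1) / (Real.Gamma α * (1 - ξ)) := by positivity
    have hA1 : ξ * (1 - s) ^ (α - 1) / (Real.Gamma α * (1 - ξ))
        ≤ 1 / (Real.Gamma α * (1 - ξ)) := by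
      rw [div_le_div_iff₀ hden hden]
      have hN1 : ξ * (1 - s) ^ (α - 1) ≤ 1 := by nlinarith
      nlinarith [mul_le_mul_of_nonneg_right hN1 hden.le]
    rw [abs_le]
    constructor <;> linarith

lemma G_measurable (α β ξ t : ℝ) : Measurable (fun s => G α β ξ t s) := by
  unfold G
  apply Measurable.ite (measurableSet_le measurable_id measurable_const) <;> fun_prop

lemma G_intervalIntegrable (hα : 1 < α) (hα2 : α ≤ 2) (hβ : 0 < β) (hβ1 : β < 1)
    (hξ : 0 < ξ) (hξ1 : ξ < 1) {t : ℝ} (ht : t ∈ Set.Icc (0 : ℝ) 1) :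
    IntervalIntegrable (fun s => G α β ξ t s) volume 0 1 := by
  have hr : (-1 : ℝ) < α - β - 1 := by linarith
  have hw := w_intervalIntegrable (α := α) (β := β) hr
  have hdom : IntervalIntegrable (fun s : ℝ => 1 / (Real.Gamma α * (1 - ξ))
      + Real.Gamma (2 - β) / (Real.Gamma (α - β) * (1 - ξ)) * (1 - s) ^ (α - β - 1))
      volume 0 1 := intervalIntegrable_const.add (hw.const_mul _)
  rw [intervalIntegrable_iff_integrableOn_Ioc_of_le (by norm_num)] at hdom ⊢
  apply hdom.mono' ((G_measurable α β ξ t).aestronglyMeasurable.restrict)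
  rw [ae_restrict_iff' measurableSet_Ioc]
  filter_upwards with s hs
  rw [Real.norm_eq_abs]
  exact G_abs_le hα hα2 hβ hβ1 hξ hξ1 ht ⟨hs.1.le, hs.2⟩

lemma G_integral_abs_le (hα : 1 < α) (hα2 : α ≤ 2) (hβ : 0 < β) (hβ1 : β < 1)
    (hξ : 0 < ξ) (hξ1 : ξ < 1) {t : ℝ} (ht : t ∈ Set.Icc (0 : ℝ) 1) :
    (∫ s in (0 : ℝ)..1, |G α β ξ t s|) ≤ 1 / (Real.Gamma α * (1 - ξ))
      + Real.Gamma (2 - β) / (Real.Gamma (α - β) * (1 - ξ)) * (1 / (α - β)) := by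
  have hr : (-1 : ℝ) < α - β - 1 := by linarith
  have hw := w_intervalIntegrable (α := α) (β := β) hr
  have hG := G_intervalIntegrable hα hα2 hβ hβ1 hξ hξ1 ht
  calc (∫ s in (0 : ℝ)..1, |G α β ξ t s|)
      ≤ ∫ s in (0 : ℝ)..1, (1 / (Real.Gamma α * (1 - ξ))
        + Real.Gamma (2 - β) / (Real.Gamma (α - β) * (1 - ξ)) * (1 - s) ^ (α - β - 1)) := by
        apply intervalIntegral.integral_mono_on (by norm_num) hG.abs
          (intervalIntegrable_const.add (hw.const_mul _))
        intro s hs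
        exact G_abs_le hα hα2 hβ hβ1 hξ hξ1 ht hs
    _ = 1 / (Real.Gamma α * (1 - ξ))
        + Real.Gamma (2 - β) / (Real.Gamma (α - β) * (1 - ξ)) * (1 / (α - β)) := by
        rw [intervalIntegral.integral_add intervalIntegrable_const (hw.const_mul _),
          intervalIntegral.integral_const_mul, w_integral (by linarith : (0:ℝ) < α - β)]
        norm_num

lemma le_Gstar (hα : 1 < α) (hα2 : α ≤ 2) (hβ : 0 < β) (hβ1 : β < 1)
    (hξ : 0 < ξ) (hξ1 : ξ < 1) {t : ℝ} (ht : t ∈ Set.Icc (0 : ℝ) 1) :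
    (∫ s in (0 : ℝ)..1, |G α β ξ t s|) ≤ Gstar α β ξ := by
  have : BddAbove (Set.range fun t : Set.Icc (0 : ℝ) 1 =>
      ∫ s in (0 : ℝ)..1, |G α β ξ (t : ℝ) s|) := by
    refine ⟨1 / (Real.Gamma α * (1 - ξ))
      + Real.Gamma (2 - β) / (Real.Gamma (α - β) * (1 - ξ)) * (1 / (α - β)), ?_⟩
    rintro x ⟨t', rfl⟩
    exact G_integral_abs_le hα hα2 hβ hβ1 hξ hξ1 t'.2
  exact le_ciSup this (⟨t, ht⟩ : Set.Icc (0 : ℝ) 1)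

end Aux

/-- Contraction-type estimates for the operators `T₁` and `T₂` under a Lipschitz condition. -/
theorem operator_lipschitz_bounds (α β ξ : ℝ) (hα : 1 < α ∧ α ≤ 2) (hβ : 0 < β ∧ β < 1)
    (hξ : 0 < ξ ∧ ξ < 1) (f : ℝ → ℝ → ℝ → ℝ)
    (hf : ContinuousOn (fun q : ℝ × ℝ × ℝ => f q.1 q.2.1 q.2.2)
        (Set.Icc (0 : ℝ) 1 ×ˢ (Set.univ : Set (ℝ × ℝ))))
    (k : ℝ) (hk : 0 < k)
    (hlip : ∀ t ∈ Set.Icc (0 : ℝ) 1, ∀ u v u' v' : ℝ,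
        |f t u v - f t u' v'| ≤ k * (|u - u'| + |v - v'|))
    (u v u' v' : ℝ → ℝ) (hu : ContinuousOn u (Set.Icc 0 1)) (hv : ContinuousOn v (Set.Icc 0 1))
    (hu' : ContinuousOn u' (Set.Icc 0 1)) (hv' : ContinuousOn v' (Set.Icc 0 1))
    (N : ℝ)
    (hN : N = max (sSup ((fun t => |u t - u' t|) '' Set.Icc 0 1))
        (sSup ((fun t => |v t - v' t|) '' Set.Icc 0 1)))
    (t : ℝ) (ht : t ∈ Set.Icc (0 : ℝ) 1) :
    |(∫ s in (0 : ℝ)..1, G α β ξ t s * f s (u s) (v s))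
        - ∫ s in (0 : ℝ)..1, G α β ξ t s * f s (u' s) (v' s)| ≤ 2 * Gstar α β ξ * k * N
      ∧ |((∫ s in (0 : ℝ)..t, f s (u s) (v s))
            - (Real.Gamma (2 - β) * t ^ (2 - α) / (Real.Gamma (3 - α) * Real.Gamma (α - β)))
                * (∫ s in (0 : ℝ)..1, (1 - s) ^ (α - β - 1) * f s (u s) (v s)))
          - ((∫ s in (0 : ℝ)..t, f s (u' s) (v' s))
            - (Real.Gamma (2 - β) * t ^ (2 - α) / (Real.Gamma (3 - α) * Real.Gamma (α - β)))
                * (∫ s in (0 : ℝ)..1, (1 - s) ^ (α - β - 1) * f s (u' s) (v' s)))|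
        ≤ 2 * k * ((Real.Gamma (3 - α) * Real.Gamma (α - β + 1) + Real.Gamma (2 - β))
            / (Real.Gamma (3 - α) * Real.Gamma (α - β + 1))) * N := by
  obtain ⟨hα1, hα2⟩ := hα
  obtain ⟨hβ0, hβ1⟩ := hβ
  obtain ⟨hξ0, hξ1⟩ := hξ
  obtain ⟨ht0, ht1⟩ := ht
  set F : ℝ → ℝ := fun s => f s (u s) (v s) with hF
  set F' : ℝ → ℝ := fun s => f s (u' s) (v' s) with hF'
  -- Bounds on |u - u'| and |v - v'|
  have hcont_uu : ContinuousOn (fun s => |u s - u' s|) (Set.Icc (0:ℝ) 1) := (hu.sub hu').abs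
  have hcont_vv : ContinuousOn (fun s => |v s - v' s|) (Set.Icc (0:ℝ) 1) := (hv.sub hv').abs
  have hbdd_u : BddAbove ((fun s => |u s - u' s|) '' Set.Icc (0:ℝ) 1) :=
    (isCompact_Icc.image_of_continuousOn hcont_uu).bddAbove
  have hbdd_v : BddAbove ((fun s => |v s - v' s|) '' Set.Icc (0:ℝ) 1) :=
    (isCompact_Icc.image_of_continuousOn hcont_vv).bddAbove
  have huN : ∀ s ∈ Set.Icc (0:ℝ) 1, |u s - u' s| ≤ N := by
    intro s hs
    rw [hN]
    exact le_trans (le_csSup hbdd_u ⟨s, hs, rfl⟩) (le_max_left _ _)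
  have hvN : ∀ s ∈ Set.Icc (0:ℝ) 1, |v s - v' s| ≤ N := by
    intro s hs
    rw [hN]
    exact le_trans (le_csSup hbdd_v ⟨s, hs, rfl⟩) (le_max_right _ _)
  have hN0 : 0 ≤ N := le_trans (abs_nonneg _) (huN 0 (by norm_num))
  have hD : ∀ s ∈ Set.Icc (0:ℝ) 1, |F s - F' s| ≤ 2 * k * N := by
    intro s hs
    calc |F s - F' s| ≤ k * (|u s - u' s| + |v s - v' s|) :=
          hlip s hs (u s) (v s) (u' s) (v' s)
      _ ≤ k * (N + N) := by
          apply mul_le_mul_of_nonneg_left _ hk.le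
          exact add_le_add (huN s hs) (hvN s hs)
      _ = 2 * k * N := by ring
  -- Continuity of F and F'
  have hFc : ContinuousOn F (Set.Icc (0:ℝ) 1) := by
    apply hf.comp (continuousOn_id.prodMk (hu.prodMk hv))
    intro s hs
    exact ⟨hs, Set.mem_univ _⟩
  have hF'c : ContinuousOn F' (Set.Icc (0:ℝ) 1) := by
    apply hf.comp (continuousOn_id.prodMk (hu'.prodMk hv'))
    intro s hs
    exact ⟨hs, Set.mem_univ _⟩
  have huIcc : Set.uIcc (0:ℝ) 1 = Set.Icc (0:ℝ) 1 := Set.uIcc_of_le (by norm_num)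
  have hHN0 : 0 ≤ 2 * k * N := by positivity
  -- Gamma positivity
  have hΓ3α : 0 < Real.Gamma (3 - α) := Real.Gamma_pos_of_pos (by linarith)
  have hΓαβ : 0 < Real.Gamma (α - β) := Real.Gamma_pos_of_pos (by linarith)
  have hΓ2β : 0 < Real.Gamma (2 - β) := Real.Gamma_pos_of_pos (by linarith)
  constructor
  · -- Part (i)
    have hGint := G_intervalIntegrable hα1 hα2 hβ0 hβ1 hξ0 hξ1 ⟨ht0, ht1⟩
    have hGF : IntervalIntegrable (fun s => G α β ξ t s * F s) volume 0 1 :=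
      hGint.mul_continuousOn (by rw [huIcc]; exact hFc)
    have hGF' : IntervalIntegrable (fun s => G α β ξ t s * F' s) volume 0 1 :=
      hGint.mul_continuousOn (by rw [huIcc]; exact hF'c)
    rw [← intervalIntegral.integral_sub hGF hGF']
    calc |∫ s in (0:ℝ)..1, (G α β ξ t s * F s - G α β ξ t s * F' s)|
        ≤ ∫ s in (0:ℝ)..1, |G α β ξ t s * F s - G α β ξ t s * F' s| :=
          intervalIntegral.abs_integral_le_integral_abs (by norm_num)
      _ ≤ ∫ s in (0:ℝ)..1, |G α β ξ t s| * (2 * k * N) := by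
          apply intervalIntegral.integral_mono_on (by norm_num) (hGF.sub hGF').abs
            (hGint.abs.mul_const _)
          intro s hs
          rw [← mul_sub, abs_mul]
          exact mul_le_mul_of_nonneg_left (hD s hs) (abs_nonneg _)
      _ = (∫ s in (0:ℝ)..1, |G α β ξ t s|) * (2 * k * N) := by
          rw [intervalIntegral.integral_mul_const]
      _ ≤ Gstar α β ξ * (2 * k * N) :=
          mul_le_mul_of_nonneg_right (le_Gstar hα1 hα2 hβ0 hβ1 hξ0 hξ1 ⟨ht0, ht1⟩) hHN0
      _ = 2 * Gstar α β ξ * k * N := by ring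
  · -- Part (ii)
    have hr : (-1 : ℝ) < α - β - 1 := by linarith
    have hw := w_intervalIntegrable (α := α) (β := β) hr
    have hw_nonneg : ∀ s ∈ Set.Icc (0:ℝ) 1, 0 ≤ (1 - s) ^ (α - β - 1) := fun s hs =>
      Real.rpow_nonneg (by linarith [hs.2]) _
    have hFt : IntervalIntegrable F volume 0 t :=
      (hFc.mono (by rw [Set.uIcc_of_le ht0]; exact Set.Icc_subset_Icc_right ht1)).intervalIntegrable
    have hF't : IntervalIntegrable F' volume 0 t :=
      (hF'c.mono (by rw [Set.uIcc_of_le ht0]; exact Set.Icc_subset_Icc_right ht1)).intervalIntegrable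
    have hwF : IntervalIntegrable (fun s => (1 - s) ^ (α - β - 1) * F s) volume 0 1 :=
      hw.mul_continuousOn (by rw [huIcc]; exact hFc)
    have hwF' : IntervalIntegrable (fun s => (1 - s) ^ (α - β - 1) * F' s) volume 0 1 :=
      hw.mul_continuousOn (by rw [huIcc]; exact hF'c)
    set c : ℝ := Real.Gamma (2 - β) * t ^ (2 - α) / (Real.Gamma (3 - α) * Real.Gamma (α - β))
      with hc
    have hX : |∫ s in (0:ℝ)..t, (F s - F' s)| ≤ 2 * k * N := by
      calc |∫ s in (0:ℝ)..t, (F s - F' s)|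
          ≤ ∫ s in (0:ℝ)..t, |F s - F' s| :=
            intervalIntegral.abs_integral_le_integral_abs ht0
        _ ≤ ∫ _s in (0:ℝ)..t, (2 * k * N) := by
            apply intervalIntegral.integral_mono_on ht0 (hFt.sub hF't).abs
              intervalIntegrable_const
            intro s hs
            exact hD s ⟨hs.1, le_trans hs.2 ht1⟩
        _ = (2 * k * N) * t := by
            rw [intervalIntegral.integral_const, smul_eq_mul]; ring
        _ ≤ (2 * k * N) * 1 := mul_le_mul_of_nonneg_left ht1 hHN0
        _ = 2 * k * N := by ring
    have hY : |∫ s in (0:ℝ)..1, (1 - s) ^ (α - β - 1) * (F s - F' s)|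
        ≤ (2 * k * N) * (1 / (α - β)) := by
      calc |∫ s in (0:ℝ)..1, (1 - s) ^ (α - β - 1) * (F s - F' s)|
          ≤ ∫ s in (0:ℝ)..1, |(1 - s) ^ (α - β - 1) * (F s - F' s)| :=
            intervalIntegral.abs_integral_le_integral_abs (by norm_num)
        _ ≤ ∫ s in (0:ℝ)..1, (1 - s) ^ (α - β - 1) * (2 * k * N) := by
            apply intervalIntegral.integral_mono_on (by norm_num) ?_ (hw.mul_const _)
            · intro s hs
              rw [abs_mul, abs_of_nonneg (hw_nonneg s hs)]
              exact mul_le_mul_of_nonneg_left (hD s hs) (hw_nonneg s hs)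
            · have : (fun s => (1 - s) ^ (α - β - 1) * (F s - F' s))
                  = fun s => (1 - s) ^ (α - β - 1) * F s - (1 - s) ^ (α - β - 1) * F' s := by
                ext s; ring
              exact (this ▸ (hwF.sub hwF')).abs
        _ = (∫ s in (0:ℝ)..1, (1 - s) ^ (α - β - 1)) * (2 * k * N) := by
            rw [intervalIntegral.integral_mul_const]
        _ = (2 * k * N) * (1 / (α - β)) := by
            rw [w_integral (by linarith : (0:ℝ) < α - β)]; ring
    have hc0 : 0 ≤ c := by
      rw [hc]
      have : (0:ℝ) ≤ t ^ (2 - α) := Real.rpow_nonneg ht0 _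
      positivity
    have hc1 : c ≤ Real.Gamma (2 - β) / (Real.Gamma (3 - α) * Real.Gamma (α - β)) := by
      rw [hc]
      apply div_le_div_of_nonneg_right _ (by positivity)
      have : t ^ (2 - α) ≤ 1 := Real.rpow_le_one ht0 ht1 (by linarith)
      nlinarith
    have e1 : (∫ s in (0:ℝ)..t, (F s - F' s))
        = (∫ s in (0:ℝ)..t, F s) - ∫ s in (0:ℝ)..t, F' s :=
      intervalIntegral.integral_sub hFt hF't
    have e2 : (∫ s in (0:ℝ)..1, (1 - s) ^ (α - β - 1) * (F s - F' s))
        = (∫ s in (0:ℝ)..1, (1 - s) ^ (α - β - 1) * F s)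
          - ∫ s in (0:ℝ)..1, (1 - s) ^ (α - β - 1) * F' s := by
      rw [← intervalIntegral.integral_sub hwF hwF']
      congr 1; ext s; ring
    have hrewrite : ((∫ s in (0 : ℝ)..t, F s)
          - c * (∫ s in (0 : ℝ)..1, (1 - s) ^ (α - β - 1) * F s))
        - ((∫ s in (0 : ℝ)..t, F' s)
          - c * (∫ s in (0 : ℝ)..1, (1 - s) ^ (α - β - 1) * F' s))
        = (∫ s in (0:ℝ)..t, (F s - F' s))
          - c * ∫ s in (0:ℝ)..1, (1 - s) ^ (α - β - 1) * (F s - F' s) := by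
      rw [e1, e2]; ring
    rw [hrewrite]
    have habs : |(∫ s in (0:ℝ)..t, (F s - F' s))
        - c * ∫ s in (0:ℝ)..1, (1 - s) ^ (α - β - 1) * (F s - F' s)|
        ≤ 2 * k * N + (Real.Gamma (2 - β) / (Real.Gamma (3 - α) * Real.Gamma (α - β)))
          * ((2 * k * N) * (1 / (α - β))) := by
      calc |(∫ s in (0:ℝ)..t, (F s - F' s))
          - c * ∫ s in (0:ℝ)..1, (1 - s) ^ (α - β - 1) * (F s - F' s)|
          ≤ |∫ s in (0:ℝ)..t, (F s - F' s)|
            + |c * ∫ s in (0:ℝ)..1, (1 - s) ^ (α - β - 1) * (F s - F' s)| := abs_sub _ _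
        _ ≤ 2 * k * N + (Real.Gamma (2 - β) / (Real.Gamma (3 - α) * Real.Gamma (α - β)))
            * ((2 * k * N) * (1 / (α - β))) := by
            apply add_le_add hX
            rw [abs_mul, abs_of_nonneg hc0]
            apply mul_le_mul hc1 hY (abs_nonneg _) (by positivity)
    refine le_trans habs (le_of_eq ?_)
    have hΓ1 : Real.Gamma (α - β + 1) = (α - β) * Real.Gamma (α - β) :=
      Real.Gamma_add_one (by linarith)
    rw [hΓ1]
    have hαβ : (0:ℝ) < α - β := by linarith
    have h1 : Real.Gamma (3 - α) ≠ 0 := ne_of_gt hΓ3α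
    have h2 : Real.Gamma (α - β) ≠ 0 := ne_of_gt hΓαβ
    have h3 : α - β ≠ 0 := ne_of_gt hαβ
    field_simp
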